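/- For all positive integers n, n! ≥ n^n / 2^{n−1+G(n)}, where G(n) = ∑_{m ≤ n} {log(n/m)/log 2}. -/

import Mathlib

open Finset

lemma aux1 (n : ℕ) : ∀ K : ℕ, ∑ k ∈ Icc 1 K, n / 2^k ≤ n - n / 2^K := by
  intro K
  induction K with
  | zero => simp
  | succ K ih =>
    rw [Finset.sum_Icc_succ_top (by omega)]
    have h1 : n / 2^(K+1) = (n / 2^K) / 2 := by
      rw [pow_succ, Nat.div_div_eq_div_mul]
    have h2 : n / 2^K ≤ n := Nat.div_le_self _ _
    omega

lemma aux2 (n : ℕ) (hn : 0 < n) :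
    ∑ m ∈ Icc 1 n, Nat.log 2 (n / m) ≤ n - 1 := by
  set K := Nat.log 2 n with hK
  have step1 : ∀ m ∈ Icc 1 n, Nat.log 2 (n / m)
      = ∑ k ∈ Icc 1 K, if 2^k ≤ n / m then 1 else 0 := by
    intro m hm
    simp only [mem_Icc] at hm
    have hm0 : 0 < m := hm.1
    have hnm : 0 < n / m := Nat.div_pos hm.2 hm0
    have hL : Nat.log 2 (n / m) ≤ K := Nat.log_mono_right (Nat.div_le_self _ _)
    have hiff : ∀ k : ℕ, (2^k ≤ n / m ↔ k ≤ Nat.log 2 (n/m)) := fun k =>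
      (Nat.le_log_iff_pow_le one_lt_two (by omega)).symm
    calc Nat.log 2 (n/m) = (Icc 1 (Nat.log 2 (n/m))).card := by simp
      _ = ((Icc 1 K).filter (fun k => 2^k ≤ n/m)).card := by
          congr 1
          ext k
          simp only [mem_filter, mem_Icc, hiff k]
          omega
      _ = ∑ k ∈ Icc 1 K, if 2^k ≤ n/m then 1 else 0 := Finset.card_filter _ _
  rw [Finset.sum_congr rfl step1, Finset.sum_comm]
  have step2 : ∀ k ∈ Icc 1 K, (∑ m ∈ Icc 1 n, if 2^k ≤ n/m then 1 else 0) = n / 2^k := by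
    intro k hk
    rw [← Finset.card_filter]
    have : (Icc 1 n).filter (fun m => 2^k ≤ n/m) = Icc 1 (n / 2^k) := by
      ext m
      simp only [mem_filter, mem_Icc]
      constructor
      · rintro ⟨⟨h1, h2⟩, h3⟩
        refine ⟨h1, (Nat.le_div_iff_mul_le (pow_pos two_pos k)).2 ?_⟩
        rw [mul_comm]
        exact (Nat.le_div_iff_mul_le h1).1 h3
      · rintro ⟨h1, h2⟩
        have h3 := (Nat.le_div_iff_mul_le (pow_pos two_pos k)).1 h2
        exact ⟨⟨h1, le_trans h2 (Nat.div_le_self _ _)⟩,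
          (Nat.le_div_iff_mul_le h1).2 (by rw [mul_comm]; exact h3)⟩
    rw [this]
    simp
  rw [Finset.sum_congr rfl step2]
  have h1 := aux1 n K
  have h2 : 1 ≤ n / 2^K := Nat.one_le_div_iff (pow_pos two_pos K) |>.2 (Nat.pow_log_le_self 2 hn.ne')
  omega

lemma aux3 (n m : ℕ) (h1 : 1 ≤ m) (h2 : m ≤ n) :
    ⌊Real.log ((n:ℝ)/(m:ℝ)) / Real.log 2⌋ = (Nat.log 2 (n / m) : ℤ) := by
  have hm0 : (0:ℝ) < m := by exact_mod_cast h1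
  have hn0 : (0:ℝ) < n := lt_of_lt_of_le hm0 (by exact_mod_cast h2)
  have hx : (0:ℝ) < (n:ℝ)/m := by positivity
  have hlog2 : (0:ℝ) < Real.log 2 := Real.log_pos one_lt_two
  have hnm : 0 < n / m := Nat.div_pos h2 h1
  set L := Nat.log 2 (n / m) with hL
  rw [Int.floor_eq_iff]
  push_cast
  constructor
  · -- (L:ℝ) ≤ log(n/m)/log 2
    rw [le_div_iff₀ hlog2]
    have hpow : (2:ℝ)^L ≤ (n:ℝ)/m := by
      have hnat : (2:ℕ)^L ≤ n / m := Nat.pow_log_le_self 2 hnm.ne'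
      have : ((2^L : ℕ) : ℝ) ≤ ((n / m : ℕ) : ℝ) := by exact_mod_cast hnat
      calc (2:ℝ)^L = ((2^L : ℕ) : ℝ) := by push_cast; ring
        _ ≤ ((n / m : ℕ) : ℝ) := this
        _ ≤ (n:ℝ)/m := Nat.cast_div_le
    have := Real.log_le_log (by positivity) hpow
    rwa [Real.log_pow] at this
  · rw [div_lt_iff₀ hlog2]
    have hpow : (n:ℝ)/m < (2:ℝ)^(L+1) := by
      have hnat : n / m < 2^(L+1) := Nat.lt_pow_succ_log_self one_lt_two _
      have h4 : n < (n / m + 1) * m := (Nat.div_lt_iff_lt_mul h1).1 (Nat.lt_succ_self _)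
      have h5 : (n:ℝ) < ((n/m : ℕ) + 1) * m := by exact_mod_cast h4
      rw [div_lt_iff₀ hm0]
      calc (n:ℝ) < ((n/m : ℕ) + 1) * m := h5
        _ ≤ (2:ℝ)^(L+1) * m := by
            apply mul_le_mul_of_nonneg_right _ hm0.le
            have : ((n/m : ℕ) + 1 : ℕ) ≤ 2^(L+1) := hnat
            exact_mod_cast this
    have := Real.log_lt_log hx hpow
    rw [Real.log_pow] at this
    push_cast at this ⊢
    linarith

theorem stmt_5 (n : ℕ) (hn : 0 < n) :
    (n.factorial : ℝ) ≥
      (n : ℝ) ^ n /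
        (2 : ℝ) ^ ((n : ℝ) - 1 +
          ∑ m ∈ Finset.Icc 1 n, Int.fract (Real.log ((n : ℝ) / (m : ℝ)) / Real.log 2)) := by
  set s := Finset.Icc 1 n with hs
  set e : ℕ → ℝ := fun m => Real.log ((n:ℝ)/(m:ℝ)) / Real.log 2 with he
  have hn0 : (0:ℝ) < n := by exact_mod_cast hn
  have hmem : ∀ m ∈ s, 1 ≤ m ∧ m ≤ n := by
    intro m hm; simpa [hs, Finset.mem_Icc] using hm
  have hfract : ∑ m ∈ s, Int.fract (e m)
      = (∑ m ∈ s, e m) - ∑ m ∈ s, ((Nat.log 2 (n/m) : ℝ)) := by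
    rw [← Finset.sum_sub_distrib]
    refine Finset.sum_congr rfl fun m hm => ?_
    obtain ⟨h1, h2⟩ := hmem m hm
    rw [Int.fract, he]
    simp only
    rw [aux3 n m h1 h2]
    push_cast; ring
  have hS : ∑ m ∈ s, ((Nat.log 2 (n/m) : ℝ)) ≤ (n:ℝ) - 1 := by
    have h := aux2 n hn
    calc ∑ m ∈ s, ((Nat.log 2 (n/m) : ℝ))
        = ((∑ m ∈ s, Nat.log 2 (n/m) : ℕ) : ℝ) := by push_cast; rfl
      _ ≤ ((n - 1 : ℕ) : ℝ) := by exact_mod_cast h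
      _ ≤ (n:ℝ) - 1 := by rw [Nat.cast_sub hn]; norm_num
  have hE : ∑ m ∈ s, e m ≤ (n:ℝ) - 1 + ∑ m ∈ s, Int.fract (e m) := by
    rw [hfract]; linarith
  have hpow : ∀ m ∈ s, (2:ℝ) ^ (e m) = (n:ℝ)/m := by
    intro m hm
    obtain ⟨h1, h2⟩ := hmem m hm
    have hm0 : (0:ℝ) < m := by exact_mod_cast h1
    have hx : (0:ℝ) < (n:ℝ)/m := by positivity
    show (2:ℝ) ^ (Real.log ((n:ℝ)/(m:ℝ)) / Real.log 2) = (n:ℝ)/m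
    rw [Real.log_div_log]
    exact Real.rpow_logb two_pos (by norm_num) hx
  have hprod : (2:ℝ) ^ (∑ m ∈ s, e m) = (n:ℝ)^n / (n.factorial : ℝ) := by
    rw [Real.rpow_sum_of_pos two_pos, Finset.prod_congr rfl hpow,
      Finset.prod_div_distrib, Finset.prod_const]
    congr 1
    · rw [hs, Nat.card_Icc]; norm_num
    · rw [← Nat.cast_prod, hs, ← Finset.Ico_add_one_right_eq_Icc, Finset.prod_Ico_id_eq_factorial]
  have h2E : (n:ℝ)^n / (n.factorial:ℝ)
      ≤ (2:ℝ) ^ ((n:ℝ) - 1 + ∑ m ∈ s, Int.fract (e m)) := by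
    rw [← hprod]
    exact Real.rpow_le_rpow_of_exponent_le one_le_two hE
  have hfac : (0:ℝ) < (n.factorial : ℝ) := by exact_mod_cast n.factorial_pos
  have hEpos : (0:ℝ) < (2:ℝ) ^ ((n:ℝ) - 1 + ∑ m ∈ s, Int.fract (e m)) :=
    Real.rpow_pos_of_pos two_pos _
  rw [ge_iff_le, div_le_iff₀ hEpos]
  rw [div_le_iff₀ hfac] at h2E
  linarith
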